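/- Let ν be a positive Borel measure on ℂ that is finite on compact sets. The following three statements are pairwise equivalent: (1) for all real numbers t1 < t2, ∫_{ℂ⁺} ω(z,[t1,t2]) dν(z) < +∞ (so the balayage of ν out of ℂ⁺ exists as a positive Borel measure finite on compact sets); (2) there exists a bounded Borel set B ⊂ ℝ with positive Lebesgue measure such that ∫_{ℂ⁺} ω(z,B) dν(z) < +∞; (3) there exists r0 > 0 such that ∫_{{z ∈ ℂ⁺ : |z| ≥ r0}} Im z/|z|² dν(z) < +∞ (the Blaschke condition near infinity for ℂ⁺). -/

import Mathlib

open MeasureTheory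

/-- The Poisson kernel of the open upper half-plane at `z ∈ ℂ⁺` and `t ∈ ℝ`. -/
noncomputable def poissonKer (z : ℂ) (t : ℝ) : ℝ :=
  (1 / Real.pi) * (z.im / ((t - z.re) ^ 2 + z.im ^ 2))

/-- Harmonic measure of a Borel set `B ⊆ ℝ` at the point `z` for the open upper
half-plane, given by the Poisson integral of the indicator of `B`. -/
noncomputable def omegaSet (z : ℂ) (B : Set ℝ) : ℝ :=
  ∫ t in B, poissonKer z t

lemma denom_pos {z : ℂ} (hz : 0 < z.im) (t : ℝ) : 0 < (t - z.re) ^ 2 + z.im ^ 2 := by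
  positivity

lemma poissonKer_nonneg {z : ℂ} (hz : 0 < z.im) (t : ℝ) : 0 ≤ poissonKer z t := by
  unfold poissonKer
  have := denom_pos hz t
  positivity

lemma integrableOn_poissonKer {z : ℂ} (hz : 0 < z.im) {B : Set ℝ} (hB : volume B ≠ ⊤) :
    IntegrableOn (poissonKer z) B := by
  have hc : Continuous (poissonKer z) := by
    apply continuous_const.mul
    exact continuous_const.div (by continuity) (fun t => (denom_pos hz t).ne')
  refine Measure.integrableOn_of_bounded hB hc.aestronglyMeasurable
    (M := (1 / Real.pi) * (1 / z.im)) ?_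
  filter_upwards with t
  rw [Real.norm_eq_abs, abs_of_nonneg (poissonKer_nonneg hz t)]
  unfold poissonKer
  have hb : z.im / ((t - z.re) ^ 2 + z.im ^ 2) ≤ 1 / z.im := by
    rw [div_le_div_iff₀ (denom_pos hz t) hz]
    nlinarith [sq_nonneg (t - z.re)]
  have hπ := Real.pi_pos
  exact mul_le_mul_of_nonneg_left hb (by positivity)

lemma sq_abs_eq {z : ℂ} (t : ℝ) :
    ‖z - (t : ℂ)‖ ^ 2 = (t - z.re) ^ 2 + z.im ^ 2 := by
  rw [Complex.sq_norm, Complex.normSq_apply]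
  simp [Complex.sub_re, Complex.sub_im]
  ring

lemma omegaSet_Icc_le_one {z : ℂ} (hz : 0 < z.im) {a b : ℝ} (hab : a ≤ b) :
    omegaSet z (Set.Icc a b) ≤ 1 := by
  have him : z.im ≠ 0 := hz.ne'
  have key : ∀ t : ℝ, HasDerivAt (fun s => (1 / Real.pi) * Real.arctan ((s - z.re) / z.im))
      (poissonKer z t) t := by
    intro t
    have h1 : HasDerivAt (fun s : ℝ => (s - z.re) / z.im) (1 / z.im) t := by
      simpa using ((hasDerivAt_id t).sub_const z.re).div_const z.im
    have h2 := (Real.hasDerivAt_arctan ((t - z.re) / z.im)).comp t h1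
    have h3 := h2.const_mul (1 / Real.pi)
    refine h3.congr_deriv ?_
    unfold poissonKer
    have hd := (denom_pos hz t).ne'
    field_simp
    ring
  have hint : IntervalIntegrable (poissonKer z) volume a b := by
    rw [intervalIntegrable_iff_integrableOn_Icc_of_le hab]
    exact integrableOn_poissonKer hz measure_Icc_lt_top.ne
  have heq : omegaSet z (Set.Icc a b) = ∫ t in a..b, poissonKer z t := by
    rw [intervalIntegral.integral_of_le hab, omegaSet, MeasureTheory.integral_Icc_eq_integral_Ioc]
  rw [heq, intervalIntegral.integral_eq_sub_of_hasDerivAt (fun t _ => key t) hint]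
  have h1 := Real.arctan_lt_pi_div_two ((b - z.re) / z.im)
  have h2 := Real.neg_pi_div_two_lt_arctan ((a - z.re) / z.im)
  have hπ := Real.pi_pos
  rw [div_mul_eq_mul_div, div_mul_eq_mul_div, ← sub_div, div_le_one hπ]
  nlinarith

lemma omega_upper {z : ℂ} (hz : 0 < z.im) {a b M : ℝ} (hab : a ≤ b)
    (hM : ∀ t ∈ Set.Icc a b, |t| ≤ M) (hzM : 2 * M ≤ ‖z‖)
    (hz0 : 0 < ‖z‖) :
    omegaSet z (Set.Icc a b) ≤ (b - a) * ((4 / Real.pi) * (z.im / ‖z‖ ^ 2)) := by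
  have hπ := Real.pi_pos
  have key : ∀ t ∈ Set.Icc a b, poissonKer z t ≤ (4 / Real.pi) * (z.im / ‖z‖ ^ 2) := by
    intro t ht
    have h1 : ‖z‖ - |t| ≤ ‖z - (t : ℂ)‖ := by
      have := norm_sub_norm_le z (t : ℂ)
      simpa [Complex.norm_real, Real.norm_eq_abs] using this
    have h2 : ‖z‖ / 2 ≤ ‖z - (t : ℂ)‖ := by
      have := hM t ht; linarith
    have h3 : ‖z‖ ^ 2 / 4 ≤ (t - z.re) ^ 2 + z.im ^ 2 := by
      rw [← sq_abs_eq]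
      nlinarith [hz0.le]
    unfold poissonKer
    rw [show (4 / Real.pi) * (z.im / ‖z‖ ^ 2)
        = (1 / Real.pi) * (z.im / (‖z‖ ^ 2 / 4)) by field_simp]
    gcongr
  have hconst : (∫ t in Set.Icc a b, ((4 / Real.pi) * (z.im / ‖z‖ ^ 2)))
      = (b - a) * ((4 / Real.pi) * (z.im / ‖z‖ ^ 2)) := by
    rw [setIntegral_const, measureReal_def, Real.volume_Icc, smul_eq_mul,
      ENNReal.toReal_ofReal (by linarith)]
  calc omegaSet z (Set.Icc a b)
      ≤ ∫ t in Set.Icc a b, ((4 / Real.pi) * (z.im / ‖z‖ ^ 2)) := by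
        refine setIntegral_mono_on (integrableOn_poissonKer hz measure_Icc_lt_top.ne)
          (integrableOn_const measure_Icc_lt_top.ne) measurableSet_Icc key
    _ = _ := hconst

lemma omega_lower {z : ℂ} (hz : 0 < z.im) {B : Set ℝ} (hBm : MeasurableSet B)
    (hBvol : volume B ≠ ⊤) {M : ℝ} (hM : ∀ t ∈ B, |t| ≤ M) (hzM : M ≤ ‖z‖)
    (hz0 : 0 < ‖z‖) :
    (volume B).toReal * ((1 / Real.pi) * (z.im / (4 * ‖z‖ ^ 2))) ≤ omegaSet z B := by
  have hπ := Real.pi_pos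
  have key : ∀ t ∈ B, (1 / Real.pi) * (z.im / (4 * ‖z‖ ^ 2)) ≤ poissonKer z t := by
    intro t ht
    have h1 : ‖z - (t : ℂ)‖ ≤ ‖z‖ + |t| := by
      have := norm_sub_le z (t : ℂ)
      simpa [Complex.norm_real, Real.norm_eq_abs] using this
    have h3 : (t - z.re) ^ 2 + z.im ^ 2 ≤ 4 * ‖z‖ ^ 2 := by
      rw [← sq_abs_eq]
      have := hM t ht
      nlinarith [norm_nonneg (z - (t : ℂ))]
    unfold poissonKer
    gcongr
  calc (volume B).toReal * ((1 / Real.pi) * (z.im / (4 * ‖z‖ ^ 2)))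
      = ∫ _ in B, ((1 / Real.pi) * (z.im / (4 * ‖z‖ ^ 2))) := by
        rw [setIntegral_const, smul_eq_mul, measureReal_def]
    _ ≤ omegaSet z B :=
        setIntegral_mono_on (integrableOn_const hBvol)
          (integrableOn_poissonKer hz hBvol) hBm key



lemma measurable_upper : MeasurableSet {z : ℂ | 0 < z.im} :=
  measurableSet_lt measurable_const Complex.measurable_im

lemma measurable_far (r : ℝ) : MeasurableSet {z : ℂ | 0 < z.im ∧ r ≤ ‖z‖} := by
  have h1 : MeasurableSet {z : ℂ | 0 < z.im} := measurable_upper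
  have h2 : MeasurableSet {z : ℂ | r ≤ ‖z‖} :=
    measurableSet_le measurable_const continuous_norm.measurable
  exact h1.inter h2

lemma measurable_near (r : ℝ) : MeasurableSet {z : ℂ | 0 < z.im ∧ ‖z‖ < r} := by
  have h1 : MeasurableSet {z : ℂ | 0 < z.im} := measurable_upper
  have h2 : MeasurableSet {z : ℂ | ‖z‖ < r} :=
    measurableSet_lt continuous_norm.measurable measurable_const
  exact h1.inter h2

lemma key31 (ν : Measure ℂ) [IsFiniteMeasureOnCompacts ν]
    (h : ∃ r0 : ℝ, 0 < r0 ∧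
        (∫⁻ z in {z : ℂ | 0 < z.im ∧ r0 ≤ ‖z‖},
            ENNReal.ofReal (z.im / ‖z‖ ^ 2) ∂ν) < ⊤) :
    ∀ t1 t2 : ℝ, t1 < t2 →
      (∫⁻ z in {z : ℂ | 0 < z.im},
          ENNReal.ofReal (omegaSet z (Set.Icc t1 t2)) ∂ν) < ⊤ := by
  obtain ⟨r0, hr0, hfin⟩ := h
  intro t1 t2 ht
  set M : ℝ := max |t1| |t2| with hMdef
  have hM0 : 0 ≤ M := le_trans (abs_nonneg t1) (le_max_left _ _)
  set R : ℝ := max r0 (2 * M + 1) with hRdef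
  have hRr0 : r0 ≤ R := le_max_left _ _
  have hRM : 2 * M + 1 ≤ R := le_max_right _ _
  have hR0 : 0 < R := lt_of_lt_of_le hr0 hRr0
  set A : Set ℂ := {z : ℂ | 0 < z.im ∧ ‖z‖ < R}
  set B : Set ℂ := {z : ℂ | 0 < z.im ∧ R ≤ ‖z‖}
  have hsub : {z : ℂ | 0 < z.im} ⊆ A ∪ B := by
    intro z hz
    rcases lt_or_ge (‖z‖) R with h | h
    · exact Or.inl ⟨hz, h⟩
    · exact Or.inr ⟨hz, h⟩
  have hmain : (∫⁻ z in {z : ℂ | 0 < z.im},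
      ENNReal.ofReal (omegaSet z (Set.Icc t1 t2)) ∂ν)
      ≤ (∫⁻ z in A, ENNReal.ofReal (omegaSet z (Set.Icc t1 t2)) ∂ν)
        + (∫⁻ z in B, ENNReal.ofReal (omegaSet z (Set.Icc t1 t2)) ∂ν) := by
    refine le_trans (lintegral_mono' (Measure.restrict_mono hsub le_rfl) le_rfl) ?_
    exact lintegral_union_le _ _ _
  have hA : (∫⁻ z in A, ENNReal.ofReal (omegaSet z (Set.Icc t1 t2)) ∂ν) < ⊤ := by
    have hptA : ∀ z ∈ A, ENNReal.ofReal (omegaSet z (Set.Icc t1 t2)) ≤ 1 := by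
      intro z hz
      calc ENNReal.ofReal (omegaSet z (Set.Icc t1 t2))
          ≤ ENNReal.ofReal 1 :=
            ENNReal.ofReal_le_ofReal (omegaSet_Icc_le_one hz.1 ht.le)
        _ = 1 := ENNReal.ofReal_one
    calc (∫⁻ z in A, ENNReal.ofReal (omegaSet z (Set.Icc t1 t2)) ∂ν)
        ≤ ∫⁻ _ in A, 1 ∂ν := by
          refine lintegral_mono_ae ((ae_restrict_iff' (measurable_near R)).2 ?_)
          exact Filter.Eventually.of_forall hptA
      _ = ν A := setLIntegral_one _
      _ ≤ ν (Metric.closedBall 0 R) := by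
          refine measure_mono ?_
          intro z hz
          simp only [Metric.mem_closedBall, dist_zero_right]
          exact le_of_lt (by simpa using hz.2)
      _ < ⊤ := (isCompact_closedBall 0 R).measure_lt_top
  have hB : (∫⁻ z in B, ENNReal.ofReal (omegaSet z (Set.Icc t1 t2)) ∂ν) < ⊤ := by
    set C : ℝ := (t2 - t1) * (4 / Real.pi) with hCdef
    have hπ := Real.pi_pos
    have hC0 : 0 ≤ C := by
      rw [hCdef]
      have h1 : (0:ℝ) ≤ t2 - t1 := by linarith
      positivity
    have hptB : ∀ z ∈ B, ENNReal.ofReal (omegaSet z (Set.Icc t1 t2))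
        ≤ ENNReal.ofReal C * ENNReal.ofReal (z.im / ‖z‖ ^ 2) := by
      intro z hz
      have hz1 : 0 < z.im := hz.1
      have hz2 : R ≤ ‖z‖ := hz.2
      have habs0 : 0 < ‖z‖ := lt_of_lt_of_le hR0 hz2
      have hMbd : ∀ t ∈ Set.Icc t1 t2, |t| ≤ M := by
        intro t htt
        rw [abs_le]
        constructor
        · have : -|t1| ≤ t1 := neg_abs_le t1
          have h2 : |t1| ≤ M := le_max_left _ _
          linarith [htt.1]
        · have : t2 ≤ |t2| := le_abs_self t2
          have h2 : |t2| ≤ M := le_max_right _ _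
          linarith [htt.2]
      have hup := omega_upper hz1 ht.le hMbd (by linarith) habs0
      calc ENNReal.ofReal (omegaSet z (Set.Icc t1 t2))
          ≤ ENNReal.ofReal (C * (z.im / ‖z‖ ^ 2)) := by
            refine ENNReal.ofReal_le_ofReal ?_
            calc omegaSet z (Set.Icc t1 t2)
                ≤ (t2 - t1) * ((4 / Real.pi) * (z.im / ‖z‖ ^ 2)) := hup
              _ = C * (z.im / ‖z‖ ^ 2) := by rw [hCdef]; ring
        _ = ENNReal.ofReal C * ENNReal.ofReal (z.im / ‖z‖ ^ 2) :=
            ENNReal.ofReal_mul hC0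
    calc (∫⁻ z in B, ENNReal.ofReal (omegaSet z (Set.Icc t1 t2)) ∂ν)
        ≤ ∫⁻ z in B, ENNReal.ofReal C * ENNReal.ofReal (z.im / ‖z‖ ^ 2) ∂ν := by
          refine lintegral_mono_ae ((ae_restrict_iff' (measurable_far R)).2 ?_)
          exact Filter.Eventually.of_forall hptB
      _ = ENNReal.ofReal C * ∫⁻ z in B, ENNReal.ofReal (z.im / ‖z‖ ^ 2) ∂ν :=
          lintegral_const_mul' _ _ ENNReal.ofReal_ne_top
      _ ≤ ENNReal.ofReal C *
            ∫⁻ z in {z : ℂ | 0 < z.im ∧ r0 ≤ ‖z‖},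
              ENNReal.ofReal (z.im / ‖z‖ ^ 2) ∂ν := by
          refine mul_le_mul_right ?_ _
          refine lintegral_mono' (Measure.restrict_mono ?_ le_rfl) le_rfl
          intro z hz
          exact ⟨hz.1, le_trans hRr0 hz.2⟩
      _ < ⊤ := ENNReal.mul_lt_top ENNReal.ofReal_lt_top hfin
  exact lt_of_le_of_lt hmain (ENNReal.add_lt_top.2 ⟨hA, hB⟩)

lemma key23 (ν : Measure ℂ) [IsFiniteMeasureOnCompacts ν]
    (h : ∃ B : Set ℝ, MeasurableSet B ∧ Bornology.IsBounded B ∧ 0 < volume B ∧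
        (∫⁻ z in {z : ℂ | 0 < z.im}, ENNReal.ofReal (omegaSet z B) ∂ν) < ⊤) :
    ∃ r0 : ℝ, 0 < r0 ∧
      (∫⁻ z in {z : ℂ | 0 < z.im ∧ r0 ≤ ‖z‖},
          ENNReal.ofReal (z.im / ‖z‖ ^ 2) ∂ν) < ⊤ := by
  obtain ⟨B, hBm, hBb, hBpos, hBfin⟩ := h
  obtain ⟨M0, hM0⟩ := hBb.exists_norm_le
  set M : ℝ := max M0 0 with hMdef
  have hM : ∀ t ∈ B, |t| ≤ M := fun t ht =>
    le_trans (by simpa [Real.norm_eq_abs] using hM0 t ht) (le_max_left _ _)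
  set r0 : ℝ := max M 1 with hrdef
  have hr0 : 0 < r0 := lt_of_lt_of_le one_pos (le_max_right _ _)
  refine ⟨r0, hr0, ?_⟩
  have hBvol : volume B ≠ ⊤ := hBb.measure_lt_top.ne
  set c : ℝ := (volume B).toReal with hcdef
  have hc0 : 0 < c := ENNReal.toReal_pos hBpos.ne' hBvol
  have hπ := Real.pi_pos
  set C : ℝ := 4 * Real.pi / c with hCdef
  have hC0 : 0 ≤ C := by
    rw [hCdef]
    positivity
  have hpt : ∀ z ∈ {z : ℂ | 0 < z.im ∧ r0 ≤ ‖z‖},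
      ENNReal.ofReal (z.im / ‖z‖ ^ 2)
        ≤ ENNReal.ofReal C * ENNReal.ofReal (omegaSet z B) := by
    intro z hz
    have hz1 : 0 < z.im := hz.1
    have hz2 : r0 ≤ ‖z‖ := hz.2
    have habs0 : 0 < ‖z‖ := lt_of_lt_of_le hr0 hz2
    have hzM : M ≤ ‖z‖ := le_trans (le_max_left _ _) hz2
    have hlow := omega_lower hz1 hBm hBvol hM hzM habs0
    have hkey : z.im / ‖z‖ ^ 2 ≤ C * omegaSet z B := by
      have h1 : z.im / ‖z‖ ^ 2
          = C * (c * ((1 / Real.pi) * (z.im / (4 * ‖z‖ ^ 2)))) := by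
        rw [hCdef]
        field_simp
      rw [h1]
      exact mul_le_mul_of_nonneg_left hlow hC0
    calc ENNReal.ofReal (z.im / ‖z‖ ^ 2)
        ≤ ENNReal.ofReal (C * omegaSet z B) := ENNReal.ofReal_le_ofReal hkey
      _ = ENNReal.ofReal C * ENNReal.ofReal (omegaSet z B) := ENNReal.ofReal_mul hC0
  calc (∫⁻ z in {z : ℂ | 0 < z.im ∧ r0 ≤ ‖z‖},
        ENNReal.ofReal (z.im / ‖z‖ ^ 2) ∂ν)
      ≤ ∫⁻ z in {z : ℂ | 0 < z.im ∧ r0 ≤ ‖z‖},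
          ENNReal.ofReal C * ENNReal.ofReal (omegaSet z B) ∂ν := by
        refine lintegral_mono_ae ((ae_restrict_iff' (measurable_far r0)).2 ?_)
        exact Filter.Eventually.of_forall hpt
    _ = ENNReal.ofReal C *
          ∫⁻ z in {z : ℂ | 0 < z.im ∧ r0 ≤ ‖z‖},
            ENNReal.ofReal (omegaSet z B) ∂ν :=
        lintegral_const_mul' _ _ ENNReal.ofReal_ne_top
    _ ≤ ENNReal.ofReal C * ∫⁻ z in {z : ℂ | 0 < z.im}, ENNReal.ofReal (omegaSet z B) ∂ν := by
        refine mul_le_mul_right ?_ _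
        refine lintegral_mono' (Measure.restrict_mono ?_ le_rfl) le_rfl
        intro z hz
        exact hz.1
    _ < ⊤ := ENNReal.mul_lt_top ENNReal.ofReal_lt_top hBfin

lemma key12 (ν : Measure ℂ) [IsFiniteMeasureOnCompacts ν]
    (h : ∀ t1 t2 : ℝ, t1 < t2 →
        (∫⁻ z in {z : ℂ | 0 < z.im},
            ENNReal.ofReal (omegaSet z (Set.Icc t1 t2)) ∂ν) < ⊤) :
    ∃ B : Set ℝ, MeasurableSet B ∧ Bornology.IsBounded B ∧ 0 < volume B ∧
        (∫⁻ z in {z : ℂ | 0 < z.im}, ENNReal.ofReal (omegaSet z B) ∂ν) < ⊤ := by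
  refine ⟨Set.Icc 0 1, measurableSet_Icc, Metric.isBounded_Icc 0 1, ?_, h 0 1 one_pos⟩
  rw [Real.volume_Icc]
  simp

theorem stmt_18 (ν : Measure ℂ) [IsFiniteMeasureOnCompacts ν] :
    ((∀ t1 t2 : ℝ, t1 < t2 →
        (∫⁻ z in {z : ℂ | 0 < z.im},
            ENNReal.ofReal (omegaSet z (Set.Icc t1 t2)) ∂ν) < ⊤) ↔
      (∃ B : Set ℝ, MeasurableSet B ∧ Bornology.IsBounded B ∧ 0 < volume B ∧
        (∫⁻ z in {z : ℂ | 0 < z.im}, ENNReal.ofReal (omegaSet z B) ∂ν) < ⊤)) ∧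
    ((∃ B : Set ℝ, MeasurableSet B ∧ Bornology.IsBounded B ∧ 0 < volume B ∧
        (∫⁻ z in {z : ℂ | 0 < z.im}, ENNReal.ofReal (omegaSet z B) ∂ν) < ⊤) ↔
      (∃ r0 : ℝ, 0 < r0 ∧
        (∫⁻ z in {z : ℂ | 0 < z.im ∧ r0 ≤ ‖z‖},
            ENNReal.ofReal (z.im / ‖z‖ ^ 2) ∂ν) < ⊤)) := by
  constructor
  · constructor
    · exact key12 ν
    · intro h2
      exact key31 ν (key23 ν h2)
  · constructor
    · exact key23 ν
    · intro h3
      exact key12 ν (key31 ν h3)
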